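/- For every integer j ≥ 1, the function h_j is strictly decreasing on the interval [r_{j−1}, 1): if r_{j−1} ≤ s < t < 1 then h_j(t) < h_j(s). -/

import Mathlib

lemma log3_gt_one : 1 < Real.log 3 := by
  rw [Real.lt_log_iff_exp_lt (by norm_num : (0:ℝ) < 3)]
  have := Real.exp_one_lt_d9
  linarith [this]

lemma log3_lt : Real.log 3 < 10/9 := by
  rw [Real.log_lt_iff_lt_exp (by norm_num : (0:ℝ) < 3)]
  have h9 : ((3:ℝ))^(9:ℕ) < (Real.exp (10/9))^(9:ℕ) := by
    have h1 : (Real.exp (10/9))^(9:ℕ) = Real.exp 1 ^ (10:ℕ) := by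
      rw [← Real.exp_nat_mul, ← Real.exp_nat_mul]; norm_num
    rw [h1]
    have h2 : (2.7182818283:ℝ)^(10:ℕ) < Real.exp 1 ^ (10:ℕ) :=
      pow_lt_pow_left₀ Real.exp_one_gt_d9 (by norm_num) (by norm_num)
    nlinarith [h2]
  exact lt_of_pow_lt_pow_left₀ 9 (Real.exp_pos _).le h9

lemma keyineq (k : ℕ) (hk : 1 ≤ k) (u : ℝ) (hu0 : 0 < u)
    (huL : u < (1 - 1/Real.log 3) / ((k:ℝ) + (1 - 1/Real.log 3))) :
    1 - u < (Real.log 3 - Real.log u) * (1 - ((k:ℝ)+1)*u) := by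
  have h1 : 1 < Real.log 3 := log3_gt_one
  have h2 : Real.log 3 < 10/9 := log3_lt
  set l := Real.log 3 with hl
  have hl0 : (0:ℝ) < l := by linarith
  set L : ℝ := 1 - 1/l with hLdef
  have hL0 : 0 < L := by
    have : 1/l < 1 := by rw [div_lt_one hl0]; linarith
    simp only [hLdef]; linarith
  have hL10 : L < 1/10 := by
    have : (9:ℝ)/10 < 1/l := by rw [lt_div_iff₀ hl0]; nlinarith
    simp only [hLdef]; linarith
  have hlL : l * L = l - 1 := by
    rw [hLdef]; field_simp
  have hk1 : (1:ℝ) ≤ (k:ℝ) := by exact_mod_cast hk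
  have hkL : 0 < (k:ℝ) + L := by linarith
  have hAlb : l + (Real.log ((k:ℝ)+L) - Real.log L) < l - Real.log u := by
    have hlt := Real.log_lt_log hu0 huL
    rw [Real.log_div (ne_of_gt hL0) (ne_of_gt hkL)] at hlt
    linarith
  have hB : (k:ℝ)/(l*((k:ℝ)+L)) < 1 - ((k:ℝ)+1)*u := by
    have hlt : ((k:ℝ)+1)*u < ((k:ℝ)+1)*(L/((k:ℝ)+L)) :=
      mul_lt_mul_of_pos_left huL (by linarith)
    have heq : 1 - ((k:ℝ)+1)*(L/((k:ℝ)+L)) = (k:ℝ)/(l*((k:ℝ)+L)) := by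
      field_simp
      clear_value L
      linear_combination (-(k:ℝ)) * hlL
    linarith
  have hG : 1 < Real.log ((k:ℝ)+L) - Real.log L := by
    rw [← Real.log_div (ne_of_gt hkL) (ne_of_gt hL0),
      Real.lt_log_iff_exp_lt (div_pos hkL hL0)]
    have h11 : (11:ℝ) < ((k:ℝ)+L)/L := by
      rw [lt_div_iff₀ hL0]; nlinarith
    have he := Real.exp_one_lt_d9
    linarith
  have hX0 : 0 < l + (Real.log ((k:ℝ)+L) - Real.log L) := by linarith
  have hY0 : 0 < (k:ℝ)/(l*((k:ℝ)+L)) := div_pos (by linarith) (by positivity)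
  have hprod : 1 ≤ (l + (Real.log ((k:ℝ)+L) - Real.log L)) * ((k:ℝ)/(l*((k:ℝ)+L))) := by
    rw [mul_div_assoc', le_div_iff₀ (by positivity)]
    have hkG : (l - 1) ≤ (k:ℝ) * (Real.log ((k:ℝ)+L) - Real.log L) := by nlinarith
    nlinarith [hlL, hkG]
  calc 1 - u < 1 := by linarith
    _ ≤ _ := hprod
    _ < (l - Real.log u) * (1 - ((k:ℝ)+1)*u) := mul_lt_mul'' hAlb hB hX0.le hY0.le

/-- For every integer `j ≥ 1`, the function
`h_j t = (j / log (j+1)) * t^(j-1) * (1-t) * log (3/(1-t))`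
is strictly decreasing on `[r_(j-1), 1)`, where `r_0 = 0` and
`r_j = 1 - L/(j+L)` with `L = 1 - 1/log 3`. -/
theorem stmt_2 (L : ℝ) (hL : L = 1 - 1 / Real.log 3)
    (r : ℕ → ℝ) (hr0 : r 0 = 0) (hr : ∀ j : ℕ, 1 ≤ j → r j = 1 - L / (j + L))
    (j : ℕ) (hj : 1 ≤ j) :
    ∀ s t : ℝ, r (j - 1) ≤ s → s < t → t < 1 →
      ((j : ℝ) / Real.log ((j : ℝ) + 1)) * t ^ (j - 1) * (1 - t) * Real.log (3 / (1 - t)) <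
      ((j : ℝ) / Real.log ((j : ℝ) + 1)) * s ^ (j - 1) * (1 - s) * Real.log (3 / (1 - s)) := by
  intro s t hs hst ht1
  have hs1 : s < 1 := hst.trans ht1
  have h1 : 1 < Real.log 3 := log3_gt_one
  have h2 : Real.log 3 < 10/9 := log3_lt
  have hL0 : 0 < L := by
    have : 1/Real.log 3 < 1 := by rw [div_lt_one (by linarith)]; linarith
    rw [hL]; linarith
  have hL10 : L < 1/10 := by
    have : (9:ℝ)/10 < 1/Real.log 3 := by rw [lt_div_iff₀ (by linarith)]; nlinarith
    rw [hL]; linarith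
  set k := j - 1 with hk
  set C := (j:ℝ)/Real.log ((j:ℝ)+1) with hCdef
  have hjR : (1:ℝ) ≤ (j:ℝ) := by exact_mod_cast hj
  have hC : 0 < C := by
    apply div_pos (by linarith)
    exact Real.log_pos (by linarith)
  set f : ℝ → ℝ := fun x => C * x^k * (1-x) * (Real.log 3 - Real.log (1-x)) with hf
  have hne : ∀ x ∈ Set.Ico (r k) (1:ℝ), (1:ℝ) - x ≠ 0 := by
    intro x hx
    have := hx.2
    exact ne_of_gt (by linarith)
  have hanti : StrictAntiOn f (Set.Ico (r k) 1) := by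
    apply strictAntiOn_of_deriv_neg (convex_Ico _ _)
    · apply ContinuousOn.mul
      · apply ContinuousOn.mul
        · exact (continuous_const.mul (continuous_pow k)).continuousOn
        · exact (continuous_const.sub continuous_id).continuousOn
      · exact continuousOn_const.sub
          (((continuous_const.sub continuous_id).continuousOn).log hne)
    · rw [interior_Ico]
      rintro x ⟨hxl, hxr⟩
      have hx1 : 0 < 1 - x := by linarith
      have hx0 : 0 < x := by
        rcases Nat.eq_zero_or_pos k with h0 | hkpos
        · rw [h0, hr0] at hxl; exact hxl
        · have hrk := hr k hkpos
          have hkR : (1:ℝ) ≤ (k:ℝ) := by exact_mod_cast hkpos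
          have hfr : L/((k:ℝ)+L) < 1 := by
            rw [div_lt_one (by linarith)]; linarith
          rw [hrk] at hxl
          linarith
      have hA1 : 1 < Real.log 3 - Real.log (1-x) := by
        have : Real.log (1-x) < 0 := Real.log_neg hx1 (by linarith)
        linarith
      have hinner : HasDerivAt (fun y : ℝ => 1 - y) (-1) x := by
        simpa using (hasDerivAt_id x).const_sub 1
      have hlog : HasDerivAt (fun y => Real.log (1-y)) (-(1-x)⁻¹) x := by
        have := (Real.hasDerivAt_log (ne_of_gt hx1)).comp x hinner
        simpa [Function.comp_def] using this
      have hA : HasDerivAt (fun y => Real.log 3 - Real.log (1-y)) ((1-x)⁻¹) x := by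
        simpa using hlog.const_sub (Real.log 3)
      have hpow : HasDerivAt (fun y : ℝ => C * y^k) (C * ((k:ℝ) * x^(k-1))) x :=
        (hasDerivAt_pow k x).const_mul C
      have hQ : HasDerivAt (fun y : ℝ => C*y^k*(1-y))
          (C*((k:ℝ)*x^(k-1))*(1-x) + C*x^k*(-1)) x := hpow.mul hinner
      have hd : HasDerivAt f
          ((C*((k:ℝ)*x^(k-1))*(1-x) + C*x^k*(-1)) * (Real.log 3 - Real.log (1-x))
            + (C*x^k*(1-x)) * (1-x)⁻¹) x := hQ.mul hA
      rw [hd.deriv]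
      have hEeq : (C*((k:ℝ)*x^(k-1))*(1-x) + C*x^k*(-1)) * (Real.log 3 - Real.log (1-x))
            + (C*x^k*(1-x)) * (1-x)⁻¹
          = C * (((k:ℝ)*x^(k-1)*(1-x) - x^k) * (Real.log 3 - Real.log (1-x)) + x^k) := by
        field_simp
        ring
      rw [hEeq]
      apply mul_neg_of_pos_of_neg hC
      rcases Nat.eq_zero_or_pos k with h0 | hkpos
      · simp only [h0, pow_zero, Nat.cast_zero, zero_mul]
        nlinarith [hA1]
      · have hrk := hr k hkpos
        rw [hrk] at hxl
        have huL : 1 - x < L/((k:ℝ)+L) := by linarith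
        have hkey := keyineq k hkpos (1-x) hx1 (by rw [← hL]; exact huL)
        have hxk : x^k = x^(k-1)*x := by
          conv_lhs => rw [show k = (k-1)+1 by omega]
          rw [pow_succ]
        have hfac : ((k:ℝ)*x^(k-1)*(1-x) - x^k) * (Real.log 3 - Real.log (1-x)) + x^k
            = x^(k-1) * ((1-(1-x)) - (Real.log 3 - Real.log (1-x)) * (1-((k:ℝ)+1)*(1-x))) := by
          rw [hxk]; ring
        rw [hfac]
        exact mul_neg_of_pos_of_neg (pow_pos hx0 _) (by linarith [hkey])
  have hmem_s : s ∈ Set.Ico (r k) 1 := ⟨hs, hs1⟩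
  have hmem_t : t ∈ Set.Ico (r k) 1 := ⟨hs.trans hst.le, ht1⟩
  have hft := hanti hmem_s hmem_t hst
  rw [Real.log_div (by norm_num : (3:ℝ) ≠ 0) (ne_of_gt (by linarith : (0:ℝ) < 1 - t)),
    Real.log_div (by norm_num : (3:ℝ) ≠ 0) (ne_of_gt (by linarith : (0:ℝ) < 1 - s))]
  exact hft
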